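/- In the setting of a pencil P_λ = P₀ − λP∞ of skew-symmetric forms on a finite-dimensional complex space V, with L = Σ_{λ ∉ Λ} Ker P_λ (Λ the set of exceptional values where corank exceeds the generic corank r), the skew-orthogonal complement L^⊥ = {ξ ∈ V : P_λ(ξ, L) = 0} is the same subspace for every λ ∈ ℂ ∪ {∞}. -/

import Mathlib

open Module LinearMap

variable {V : Type*} [AddCommGroup V] [Module ℂ V]

/-- The pencil `P_λ = P₀ - λ P_∞` of bilinear forms, `λ ∈ ℂ ∪ {∞}` (`∞` is `none`,
with `P_∞ := P∞`). -/
noncomputable def pencil (P0 Pinf : V →ₗ[ℂ] V →ₗ[ℂ] ℂ) : Option ℂ → (V →ₗ[ℂ] V →ₗ[ℂ] ℂ)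
  | none => Pinf
  | some l => P0 - l • Pinf

/-- The generic (minimal) corank `r` of the pencil. -/
noncomputable def genericCorank (P0 Pinf : V →ₗ[ℂ] V →ₗ[ℂ] ℂ) : ℕ :=
  sInf (Set.range fun l : Option ℂ => finrank ℂ ↥(LinearMap.ker (pencil P0 Pinf l)))

/-- The exceptional set `Λ` of pencil parameters where the corank exceeds `r`. -/
def exceptional (P0 Pinf : V →ₗ[ℂ] V →ₗ[ℂ] ℂ) : Set (Option ℂ) :=
  {l | genericCorank P0 Pinf < finrank ℂ ↥(LinearMap.ker (pencil P0 Pinf l))}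

/-- `L = Σ_{λ ∉ Λ} Ker P_λ`. -/
noncomputable def Lspace (P0 Pinf : V →ₗ[ℂ] V →ₗ[ℂ] ℂ) : Submodule ℂ V :=
  ⨆ l ∈ {l : Option ℂ | l ∉ exceptional P0 Pinf}, LinearMap.ker (pencil P0 Pinf l)


open Matrix Polynomial


lemma exists_submatrix_det_isUnit {n r : ℕ} (A : Matrix (Fin n) (Fin n) ℂ)
    (hr : A.rank = r) :
    ∃ I J : Fin r → Fin n, Function.Injective I ∧ Function.Injective J ∧
      IsUnit (A.submatrix I J).det := by
  classical
  -- columns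
  obtain ⟨t, hts, hspan, hli⟩ := exists_linearIndependent ℂ (Set.range Aᵀ)
  have htfin : t.Finite := (Set.finite_range Aᵀ).subset hts
  haveI := htfin.fintype
  have hcard : Fintype.card t = r := by
    have h1 : finrank ℂ (Submodule.span ℂ t) = t.toFinset.card :=
      finrank_span_set_eq_card hli
    have h2 : A.rank = finrank ℂ (Submodule.span ℂ t) := by
      rw [A.rank_eq_finrank_span_cols, hspan]; rfl
    rw [← hr, h2, h1, Set.toFinset_card]
  let e : Fin r ≃ t := (Fintype.equivFinOfCardEq hcard).symm
  have hJc : ∀ a : Fin r, ∃ j, Aᵀ j = (e a : Fin n → ℂ) := fun a => hts (e a).2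
  choose J hJ using hJc
  have hJinj : Function.Injective J := by
    intro a a' h
    have : (e a : Fin n → ℂ) = (e a' : Fin n → ℂ) := by rw [← hJ, ← hJ, h]
    exact e.injective (Subtype.ext this)
  have hcols : LinearIndependent ℂ fun a : Fin r => Aᵀ (J a) := by
    have : (fun a : Fin r => Aᵀ (J a)) = (fun x : t => (x : Fin n → ℂ)) ∘ e := by
      funext a; simp [hJ a]
    rw [this]
    exact hli.comp e e.injective
  -- rows of the n×r column-selected matrix
  set B1 : Matrix (Fin r) (Fin n) ℂ := Aᵀ.submatrix J _root_.id with hB1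
  have hB1rows : LinearIndependent ℂ fun a : Fin r => B1 a := hcols
  have hB1rank : B1.rank = r := by
    have := hB1rows.rank_matrix; rw [Fintype.card_fin] at this; exact this
  obtain ⟨s, hss, hspan2, hli2⟩ := exists_linearIndependent ℂ (Set.range B1ᵀ)
  have hsfin : s.Finite := (Set.finite_range B1ᵀ).subset hss
  haveI := hsfin.fintype
  have hcard2 : Fintype.card s = r := by
    have h1 : finrank ℂ (Submodule.span ℂ s) = s.toFinset.card :=
      finrank_span_set_eq_card hli2
    have h2 : B1.rank = finrank ℂ (Submodule.span ℂ s) := by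
      rw [B1.rank_eq_finrank_span_cols, hspan2]; rfl
    have h3 : s.toFinset.card = r := by rw [← h1, ← h2]; exact hB1rank
    rwa [Set.toFinset_card] at h3
  let e2 : Fin r ≃ s := (Fintype.equivFinOfCardEq hcard2).symm
  have hIc : ∀ b : Fin r, ∃ i, B1ᵀ i = (e2 b : Fin r → ℂ) := fun b => hss (e2 b).2
  choose I hI using hIc
  have hIinj : Function.Injective I := by
    intro b b' h
    have : (e2 b : Fin r → ℂ) = (e2 b' : Fin r → ℂ) := by rw [← hI, ← hI, h]
    exact e2.injective (Subtype.ext this)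
  have hcols2 : LinearIndependent ℂ fun b : Fin r => B1ᵀ (I b) := by
    have : (fun b : Fin r => B1ᵀ (I b)) = (fun x : s => (x : Fin r → ℂ)) ∘ e2 := by
      funext b; simp [hI b]
    rw [this]
    exact hli2.comp e2 e2.injective
  refine ⟨I, J, hIinj, hJinj, ?_⟩
  have hsq : IsUnit (B1.submatrix _root_.id I) := by
    rw [← Matrix.linearIndependent_cols_iff_isUnit]
    have : (B1.submatrix _root_.id I)ᵀ = fun b => B1ᵀ (I b) := by
      funext b a; simp [Matrix.submatrix, Matrix.transpose]
    show LinearIndependent ℂ (B1.submatrix _root_.id I)ᵀ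
    rw [this]  -- may fail; transpose as function
    exact hcols2
  have : (A.submatrix I J)ᵀ = B1.submatrix _root_.id I := by
    funext a b; simp [hB1, Matrix.submatrix, Matrix.transpose]
  rw [← Matrix.det_transpose, this]
  exact (Matrix.isUnit_iff_isUnit_det _).mp hsq

set_option maxHeartbeats 800000 in
lemma gml {n : ℕ} (A B : Matrix (Fin n) (Fin n) ℂ)
    (h : ∀ t : ℂ, finrank ℂ (LinearMap.ker A.mulVecLin) ≤
      finrank ℂ (LinearMap.ker (A + t • B).mulVecLin)) :
    (∃ F : Set ℂ, F.Finite ∧ ∀ t ∉ F,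
        finrank ℂ (LinearMap.ker (A + t • B).mulVecLin) ≤ finrank ℂ (LinearMap.ker A.mulVecLin))
    ∧ ∀ S : Set ℂ, S.Infinite →
        LinearMap.ker A.mulVecLin ≤ ⨆ t ∈ S, LinearMap.ker (A + t • B).mulVecLin := by
  classical
  set c := finrank ℂ (LinearMap.ker A.mulVecLin) with hc
  set r := A.rank with hr
  have hcr : r + c = n := by
    have h1 := LinearMap.finrank_range_add_finrank_ker A.mulVecLin
    rw [finrank_pi, Fintype.card_fin] at h1
    exact h1
  obtain ⟨I, J, hIinj, hJinj, hdet0⟩ := exists_submatrix_det_isUnit A rfl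
  set p : Matrix (Fin n) (Fin n) ℂ[X] := fun i j => C (A i j) + X * C (B i j) with hp
  have hpe : ∀ ν : ℂ, p.map (eval ν) = A + ν • B := by
    intro ν
    ext i j
    show eval ν (C (A i j) + X * C (B i j)) = A i j + ν * B i j
    simp only [eval_add, eval_mul, eval_C, eval_X]
  set Δ : ℂ[X] := (p.submatrix I J).det with hΔdef
  have hΔν : ∀ ν : ℂ, Δ.eval ν = ((A + ν • B).submatrix I J).det := by
    intro ν
    have h1 : (evalRingHom ν) (p.submatrix I J).det = ((p.submatrix I J).map (evalRingHom ν)).det :=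
      RingHom.map_det _ _
    have h2 : (p.submatrix I J).map (evalRingHom ν) = (p.map (eval ν)).submatrix I J := by
      ext i j; rfl
    rw [hΔdef]
    calc (p.submatrix I J).det.eval ν = (evalRingHom ν) (p.submatrix I J).det := rfl
      _ = ((p.map (eval ν)).submatrix I J).det := by rw [h1, h2]
      _ = ((A + ν • B).submatrix I J).det := by rw [hpe]
  have hA0 : A + (0:ℂ) • B = A := by simp
  have hΔ0 : Δ.eval 0 ≠ 0 := by
    rw [hΔν 0, hA0]
    exact hdet0.ne_zero
  have hΔ : Δ ≠ 0 := fun hh => hΔ0 (by rw [hh]; simp)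
  -- key rank identity
  have hTker : ∀ ν : ℂ, Δ.eval ν ≠ 0 →
      LinearMap.ker ((A + ν • B).mulVecLin) =
        LinearMap.ker (((A + ν • B).submatrix I _root_.id).mulVecLin) ∧
      finrank ℂ (LinearMap.ker (((A + ν • B).submatrix I _root_.id).mulVecLin)) = c := by
    intro ν hν
    set M := A + ν • B with hM
    set T := M.submatrix I _root_.id with hT
    have hQ : IsUnit (M.submatrix I J) :=
      (Matrix.isUnit_iff_isUnit_det _).mpr (isUnit_iff_ne_zero.mpr (by rw [← hΔν ν]; exact hν))
    have hTr : T.rank = r := by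
      have hle : T.rank ≤ r := by
        have := T.rank_le_card_height
        simpa using this
      have h1 : M.submatrix I J = T * (1 : Matrix (Fin n) (Fin n) ℂ).submatrix (Equiv.refl _) J := by
        rw [Matrix.mul_submatrix_one, Matrix.submatrix_submatrix]
        rfl
      have h2 : (M.submatrix I J).rank ≤ T.rank := by
        rw [h1]; exact T.rank_mul_le_left _
      have h3 : (M.submatrix I J).rank = r := by
        rw [Matrix.rank_of_isUnit _ hQ, Fintype.card_fin]
      omega
    have hTk : finrank ℂ (LinearMap.ker T.mulVecLin) = c := by
      have h1 := LinearMap.finrank_range_add_finrank_ker T.mulVecLin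
      rw [finrank_pi, Fintype.card_fin] at h1
      have h2 : T.rank = finrank ℂ (LinearMap.range T.mulVecLin) := rfl
      omega
    have hsub : LinearMap.ker M.mulVecLin ≤ LinearMap.ker T.mulVecLin := by
      intro x hx
      rw [LinearMap.mem_ker, Matrix.mulVecLin_apply] at hx ⊢
      funext a
      have : (T *ᵥ x) a = (M *ᵥ x) (I a) := rfl
      rw [this, hx]
      rfl
    have heq : LinearMap.ker M.mulVecLin = LinearMap.ker T.mulVecLin :=
      Submodule.eq_of_le_of_finrank_le hsub (by rw [hTk]; exact h ν)
    exact ⟨heq, hTk⟩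
  constructor
  · refine ⟨{ν | Δ.eval ν = 0}, ?_, ?_⟩
    · exact Polynomial.finite_setOf_isRoot hΔ
    · intro ν hν
      obtain ⟨he, hfr⟩ := hTker ν hν
      rw [he, hfr]
  -- sections
  set u : Fin n → Fin r → ℂ[X] := fun j₀ => (p.submatrix I J).cramer (fun b => p (I b) j₀) with hu
  set W : Fin n → Fin n → ℂ[X] := fun j₀ k =>
    (if k = j₀ then -Δ else 0) + ∑ a, if J a = k then u j₀ a else 0 with hW
  have hrow : ∀ j₀ i, (p *ᵥ W j₀) i =
      -(p i j₀ * Δ) + ∑ a, p i (J a) * u j₀ a := by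
    intro j₀ i
    have : (p *ᵥ W j₀) i = ∑ k, p i k * W j₀ k := rfl
    rw [this]
    simp only [hW, mul_add, Finset.sum_add_distrib]
    refine congrArg₂ (· + ·) ?_ ?_
    · rw [Finset.sum_congr rfl (fun k _ => mul_ite (k = j₀) (p i k) (-Δ) 0)]
      simp only [mul_zero, mul_neg]
      rw [Finset.sum_ite_eq' Finset.univ j₀ (fun k => -(p i k * Δ))]
      simp
    · rw [Finset.sum_congr rfl (fun k _ => Finset.mul_sum Finset.univ _ (p i k))]
      rw [Finset.sum_comm]
      refine Finset.sum_congr rfl (fun a _ => ?_)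
      rw [Finset.sum_congr rfl (fun k _ => mul_ite (J a = k) (p i k) (u j₀ a) 0)]
      simp only [mul_zero]
      rw [Finset.sum_ite_eq Finset.univ (J a) (fun k => p i k * u j₀ a)]
      simp
  have hrowI : ∀ j₀ a', (p *ᵥ W j₀) (I a') = 0 := by
    intro j₀ a'
    rw [hrow]
    have h1 : ∀ a, p (I a') (J a) = (p.submatrix I J) a' a := fun a => rfl
    rw [Finset.sum_congr rfl (fun a _ => by rw [h1 a])]
    have h2 : ∑ a, (p.submatrix I J) a' a * u j₀ a = ((p.submatrix I J) *ᵥ u j₀) a' := rfl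
    rw [h2, hu, Matrix.mulVec_cramer]
    simp [hΔdef, mul_comm]
  -- evaluation of sections
  have hev : ∀ (j₀ : Fin n) (ν : ℂ),
      (A + ν • B) *ᵥ (fun k => (W j₀ k).eval ν) = fun i => ((p *ᵥ W j₀) i).eval ν := by
    intro j₀ ν
    funext i
    have h1 : (p *ᵥ W j₀) i = ∑ k, p i k * W j₀ k := rfl
    rw [h1, eval_finset_sum]
    have h2 : ((A + ν • B) *ᵥ fun k => (W j₀ k).eval ν) i
        = ∑ k, (A + ν • B) i k * (W j₀ k).eval ν := rfl
    rw [h2]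
    refine Finset.sum_congr rfl (fun k _ => ?_)
    rw [eval_mul]
    congr 1
    rw [← hpe ν]
    rfl
  -- master identity
  have hmv : ∀ j₀ : Fin n, j₀ ∉ Set.range J → ∀ ν : ℂ,
      (A + ν • B) *ᵥ (fun k => (W j₀ k).eval ν) = 0 := by
    intro j₀ hj₀ ν
    have hzero : p *ᵥ W j₀ = 0 := by
      funext i
      apply Polynomial.eq_zero_of_infinite_isRoot
      apply Set.Infinite.mono (s := {ν : ℂ | eval ν Δ ≠ 0})
      · intro ν hν
        -- show (p *ᵥ W j₀) i has root ν
        have h1 := hTker ν hν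
        set M := A + ν • B with hM
        set T := M.submatrix I _root_.id with hT
        have hTw : T *ᵥ (fun k => (W j₀ k).eval ν) = 0 := by
          funext a'
          have : (T *ᵥ fun k => (W j₀ k).eval ν) a' = (M *ᵥ fun k => (W j₀ k).eval ν) (I a') := rfl
          rw [this, hev j₀ ν]
          show eval ν ((p *ᵥ W j₀) (I a')) = (0 : Fin A.rank → ℂ) a'
          rw [hrowI j₀ a']
          simp
        have hmem : (fun k => (W j₀ k).eval ν) ∈ LinearMap.ker T.mulVecLin := by
          rw [LinearMap.mem_ker, Matrix.mulVecLin_apply, hTw]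
        rw [← h1.1, LinearMap.mem_ker, Matrix.mulVecLin_apply] at hmem
        show ((p *ᵥ W j₀) i).eval ν = 0
        simpa using congrFun ((hev j₀ ν).symm.trans hmem) i
      · have hfin : {ν : ℂ | eval ν Δ = 0}.Finite := Polynomial.finite_setOf_isRoot hΔ
        exact hfin.infinite_compl
    rw [hev j₀ ν, hzero]
    funext i
    simp
  -- coordinate values outside the range of J
  have hWnotJ : ∀ j₀ : Fin n, j₀ ∉ Set.range J → ∀ k : Fin n, k ∉ Set.range J →
      W j₀ k = if k = j₀ then -Δ else 0 := by
    intro j₀ hj₀ k hk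
    show (if k = j₀ then -Δ else 0) + (∑ a, if J a = k then u j₀ a else 0) = if k = j₀ then -Δ else 0
    rw [Finset.sum_eq_zero, add_zero]
    intro a _
    rw [if_neg]
    exact fun hh => hk ⟨a, hh⟩
  -- part 2
  intro S hS x hx
  set U := ⨆ t ∈ S, LinearMap.ker (A + t • B).mulVecLin with hU
  have hUle : ∀ t ∈ S, LinearMap.ker (A + t • B).mulVecLin ≤ U := by
    intro t ht
    exact le_iSup_of_le t (le_iSup_of_le ht le_rfl)
  -- Lagrange interpolation setup
  set d := Finset.univ.sup (fun jk : Fin n × Fin n => (W jk.1 jk.2).natDegree) with hd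
  obtain ⟨Fs, hFsS, hFscard⟩ := hS.exists_subset_card_eq (d + 1)
  set co : ℂ → ℂ := fun i => (Lagrange.basis Fs _root_.id i).eval 0 with hco
  have hlag : ∀ q : ℂ[X], q.natDegree ≤ d → q.eval 0 = ∑ i ∈ Fs, co i * q.eval i := by
    intro q hq
    have hdeg : q.degree < (Fs.card : ℕ) := by
      rw [hFscard]
      exact lt_of_le_of_lt Polynomial.degree_le_natDegree
        (by exact_mod_cast Nat.lt_succ_of_le hq)
    conv_lhs => rw [Lagrange.eq_interpolate (Set.injOn_id _) hdeg]
    rw [Lagrange.interpolate_apply]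
    rw [eval_finset_sum]
    refine Finset.sum_congr rfl (fun i _ => ?_)
    rw [eval_mul, eval_C]
    rw [mul_comm]
    rfl
  have hW0 : ∀ j₀ : Fin n,
      (fun k => (W j₀ k).eval 0) = ∑ i ∈ Fs, co i • (fun k => (W j₀ k).eval i) := by
    intro j₀
    funext k
    rw [Finset.sum_apply]
    simp only [Pi.smul_apply, smul_eq_mul]
    have hle : (W j₀ k).natDegree ≤ d := by
      rw [hd]; exact Finset.le_sup (f := fun jk : Fin n × Fin n => (W jk.1 jk.2).natDegree) (b := (j₀, k)) (Finset.mem_univ _)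
    exact hlag _ hle
  have hWker : ∀ (j₀ : Fin n), j₀ ∉ Set.range J → ∀ ν : ℂ,
      (fun k => (W j₀ k).eval ν) ∈ LinearMap.ker (A + ν • B).mulVecLin := by
    intro j₀ hj₀ ν
    rw [LinearMap.mem_ker, Matrix.mulVecLin_apply]
    exact hmv j₀ hj₀ ν
  have hW0U : ∀ j₀ : Fin n, j₀ ∉ Set.range J → (fun k => (W j₀ k).eval 0) ∈ U := by
    intro j₀ hj₀
    rw [hW0 j₀]
    refine Submodule.sum_mem _ (fun i hi => Submodule.smul_mem _ _ ?_)
    exact hUle i (hFsS hi) (hWker j₀ hj₀ i)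
  -- combination
  set δ := Δ.eval 0 with hδ
  set fil := Finset.univ.filter (fun j : Fin n => j ∉ Set.range J) with hfil
  set z : Fin n → ℂ := δ • x + ∑ j₀ ∈ fil, x j₀ • (fun k => (W j₀ k).eval 0) with hz
  have hWA : ∀ j₀ : Fin n, j₀ ∉ Set.range J →
      (fun k => (W j₀ k).eval 0) ∈ LinearMap.ker A.mulVecLin := by
    intro j₀ hj₀
    have := hWker j₀ hj₀ 0
    rwa [hA0] at this
  have hzker : z ∈ LinearMap.ker A.mulVecLin := by
    refine Submodule.add_mem _ (Submodule.smul_mem _ _ hx) ?_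
    refine Submodule.sum_mem _ (fun j₀ hj₀ => Submodule.smul_mem _ _ ?_)
    exact hWA j₀ (Finset.mem_filter.mp hj₀).2
  have hznotJ : ∀ k : Fin n, k ∉ Set.range J → z k = 0 := by
    intro k hk
    rw [hz]
    simp only [Pi.add_apply, Pi.smul_apply, smul_eq_mul, Finset.sum_apply]
    have h1 : ∀ j₀ ∈ fil, x j₀ * (W j₀ k).eval 0 = if k = j₀ then x j₀ * (-δ) else 0 := by
      intro j₀ hj₀
      rw [hWnotJ j₀ (Finset.mem_filter.mp hj₀).2 k hk]
      rw [apply_ite (eval 0), eval_neg, eval_zero]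
      rw [mul_ite, mul_zero]
    rw [Finset.sum_congr rfl h1]
    rw [Finset.sum_ite_eq fil k (fun j₀ => x j₀ * (-δ))]
    rw [if_pos (Finset.mem_filter.mpr ⟨Finset.mem_univ k, hk⟩)]
    ring
  have hzJ : ∀ a, z (J a) = 0 := by
    have hAz : A *ᵥ z = 0 := by
      have := hzker
      rwa [LinearMap.mem_ker, Matrix.mulVecLin_apply] at this
    set Q0 := A.submatrix I J with hQ0def
    have hQ0 : IsUnit Q0 := (Matrix.isUnit_iff_isUnit_det _).mpr hdet0
    have hQz : Q0 *ᵥ (z ∘ J) = 0 := by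
      funext a'
      have h1 : (Q0 *ᵥ (z ∘ J)) a' = ∑ a, A (I a') (J a) * z (J a) := rfl
      have h2 : ∑ a, A (I a') (J a) * z (J a)
          = ∑ k ∈ Finset.univ.image J, A (I a') k * z k := by
        rw [Finset.sum_image (fun a _ b _ hh => hJinj hh)]
      have h3 : ∑ k ∈ Finset.univ.image J, A (I a') k * z k
          = ∑ k, A (I a') k * z k := by
        refine Finset.sum_subset (Finset.subset_univ _) (fun k _ hk => ?_)
        have : k ∉ Set.range J := by
          intro ⟨a, ha⟩
          exact hk (Finset.mem_image.mpr ⟨a, Finset.mem_univ a, ha⟩)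
        rw [hznotJ k this, mul_zero]
      have h4 : ∑ k, A (I a') k * z k = (A *ᵥ z) (I a') := rfl
      rw [h1, h2, h3, h4, hAz]
      rfl
    have hinj : Function.Injective Q0.mulVec := Matrix.mulVec_injective_iff_isUnit.mpr hQ0
    have : z ∘ J = 0 := by
      apply hinj
      rw [hQz, Matrix.mulVec_zero]
    intro a
    exact congrFun this a
  have hz0 : z = 0 := by
    funext k
    by_cases hk : k ∈ Set.range J
    · obtain ⟨a, rfl⟩ := hk
      exact hzJ a
    · exact hznotJ k hk
  have hsumU : ∑ j₀ ∈ fil, x j₀ • (fun k => (W j₀ k).eval 0) ∈ U := by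
    refine Submodule.sum_mem _ (fun j₀ hj₀ => Submodule.smul_mem _ _ ?_)
    exact hW0U j₀ (Finset.mem_filter.mp hj₀).2
  have hδx : δ • x ∈ U := by
    have : δ • x = -(∑ j₀ ∈ fil, x j₀ • (fun k => (W j₀ k).eval 0)) := by
      have := hz0
      rw [hz] at this
      exact eq_neg_of_add_eq_zero_left this
    rw [this]
    exact Submodule.neg_mem _ hsumU
  have hxeq : x = δ⁻¹ • (δ • x) := by
    rw [smul_smul, inv_mul_cancel₀ hΔ0, one_smul]
  rw [hxeq]
  exact Submodule.smul_mem _ _ hδx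

lemma ker_map_equivFun {n : ℕ} (b : Basis (Fin n) ℂ V) (B : V →ₗ[ℂ] V →ₗ[ℂ] ℂ) :
    (LinearMap.ker B).map (b.equivFun : V →ₗ[ℂ] (Fin n → ℂ)) =
      LinearMap.ker ((LinearMap.toMatrix₂ b b B)ᵀ.mulVecLin) := by
  classical
  ext x
  rw [Submodule.mem_map_equiv, LinearMap.mem_ker, LinearMap.mem_ker, Matrix.mulVecLin_apply]
  have key : ∀ j, B (b.equivFun.symm x) (b j) = ((LinearMap.toMatrix₂ b b B)ᵀ *ᵥ x) j := by
    intro j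
    rw [Basis.equivFun_symm_apply]
    rw [map_sum]
    have h1 : (∑ i, B (x i • b i)) (b j) = ∑ i, x i * B (b i) (b j) := by
      rw [LinearMap.sum_apply]
      refine Finset.sum_congr rfl (fun i _ => ?_)
      rw [_root_.map_smul, LinearMap.smul_apply, smul_eq_mul]
    rw [h1]
    have h2 : ((LinearMap.toMatrix₂ b b B)ᵀ *ᵥ x) j
        = ∑ i, (LinearMap.toMatrix₂ b b B) i j * x i := rfl
    rw [h2]
    refine Finset.sum_congr rfl (fun i _ => ?_)
    rw [LinearMap.toMatrix₂_apply, mul_comm]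
  constructor
  · intro hB
    funext j
    rw [← key j, hB]
    rfl
  · intro hM
    apply b.ext
    intro j
    rw [key j, hM]
    rfl

lemma finrank_ker_eq_matrix {n : ℕ} (b : Basis (Fin n) ℂ V) (B : V →ₗ[ℂ] V →ₗ[ℂ] ℂ) :
    finrank ℂ (LinearMap.ker B) =
      finrank ℂ (LinearMap.ker ((LinearMap.toMatrix₂ b b B)ᵀ.mulVecLin)) := by
  rw [← ker_map_equivFun b B, LinearEquiv.finrank_map_eq]

section PencilLemmas

variable (P0 Pinf : V →ₗ[ℂ] V →ₗ[ℂ] ℂ)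

lemma corank_min (l : Option ℂ) :
    genericCorank P0 Pinf ≤ finrank ℂ (LinearMap.ker (pencil P0 Pinf l)) :=
  Nat.sInf_le ⟨l, rfl⟩

lemma nonexc_corank {l : Option ℂ} (h : l ∉ exceptional P0 Pinf) :
    finrank ℂ (LinearMap.ker (pencil P0 Pinf l)) = genericCorank P0 Pinf :=
  le_antisymm (not_lt.mp h) (corank_min P0 Pinf l)

lemma exists_nonexc : ∃ l, l ∉ exceptional P0 Pinf := by
  obtain ⟨l, hl⟩ := Nat.sInf_mem (s := Set.range fun l : Option ℂ =>
    finrank ℂ ↥(LinearMap.ker (pencil P0 Pinf l))) (Set.range_nonempty _)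
  exact ⟨l, not_lt.mpr (le_of_eq hl)⟩

lemma pmat_some {m : ℕ} (b : Basis (Fin m) ℂ V) (ν : ℂ) :
    (LinearMap.toMatrix₂ b b (pencil P0 Pinf (some ν)))ᵀ =
      (LinearMap.toMatrix₂ b b P0)ᵀ - ν • (LinearMap.toMatrix₂ b b Pinf)ᵀ := by
  show (LinearMap.toMatrix₂ b b (P0 - ν • Pinf))ᵀ = _
  rw [map_sub, _root_.map_smul, Matrix.transpose_sub, Matrix.transpose_smul]

lemma infinite_aux {f : ℂ → ℂ} (hf : Function.Injective f) (G : Set ℂ) (hG : G.Finite) :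
    {t : ℂ | t ≠ 0 ∧ f t ∉ G}.Infinite := by
  have hsub : {t : ℂ | t ≠ 0 ∧ f t ∉ G}ᶜ ⊆ {0} ∪ f ⁻¹' G := by
    intro t ht
    simp only [Set.mem_compl_iff, Set.mem_setOf_eq, not_and, not_not] at ht
    by_cases h0 : t = 0
    · exact Or.inl h0
    · exact Or.inr (ht h0)
  have hfin : ({0} ∪ f ⁻¹' G : Set ℂ).Finite :=
    (Set.finite_singleton 0).union (hG.preimage hf.injOn)
  have := (hfin.subset hsub).infinite_compl
  rwa [compl_compl] at this

variable [FiniteDimensional ℂ V]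

lemma gml_pencil_wrap {m : ℕ} (b : Basis (Fin m) ℂ V)
    (A Bm : Matrix (Fin m) (Fin m) ℂ) (g : ℂ → Option ℂ)
    (hk : ∀ t : ℂ, LinearMap.ker (A + t • Bm).mulVecLin
        = LinearMap.ker ((LinearMap.toMatrix₂ b b (pencil P0 Pinf (g t)))ᵀ.mulVecLin))
    (hg0 : g 0 ∉ exceptional P0 Pinf) :
    (∃ F : Set ℂ, F.Finite ∧ ∀ t ∉ F, g t ∉ exceptional P0 Pinf) ∧
      ∀ S : Set ℂ, S.Infinite →
        LinearMap.ker (pencil P0 Pinf (g 0)) ≤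
          ⨆ t ∈ S, LinearMap.ker (pencil P0 Pinf (g t)) := by
  have hfr : ∀ t : ℂ, finrank ℂ (LinearMap.ker (A + t • Bm).mulVecLin)
      = finrank ℂ (LinearMap.ker (pencil P0 Pinf (g t))) := by
    intro t
    rw [hk t, ← finrank_ker_eq_matrix b _]
  have hA0 : A + (0 : ℂ) • Bm = A := by simp
  have hfrA : finrank ℂ (LinearMap.ker A.mulVecLin)
      = finrank ℂ (LinearMap.ker (pencil P0 Pinf (g 0))) := by
    have := hfr 0
    rwa [hA0] at this
  have hyp : ∀ t : ℂ, finrank ℂ (LinearMap.ker A.mulVecLin) ≤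
      finrank ℂ (LinearMap.ker (A + t • Bm).mulVecLin) := by
    intro t
    rw [hfrA, hfr t, nonexc_corank P0 Pinf hg0]
    exact corank_min P0 Pinf (g t)
  obtain ⟨⟨F, hFfin, hFle⟩, hSup⟩ := gml A Bm hyp
  constructor
  · refine ⟨F, hFfin, fun t ht => ?_⟩
    have h1 := hFle t ht
    rw [hfr t, hfrA, nonexc_corank P0 Pinf hg0] at h1
    exact not_lt.mpr h1
  · intro S hS
    have h2 := hSup S hS
    intro x hx
    have hx' : b.equivFun x ∈ LinearMap.ker A.mulVecLin := by
      have hmem : b.equivFun x ∈ (LinearMap.ker (pencil P0 Pinf (g 0))).map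
          (b.equivFun : V →ₗ[ℂ] (Fin m → ℂ)) := Submodule.mem_map_of_mem hx
      rw [ker_map_equivFun] at hmem
      have hk0 := hk 0
      rw [hA0] at hk0
      rwa [← hk0] at hmem
    have hx2 := h2 hx'
    have hEq : (⨆ t ∈ S, LinearMap.ker (A + t • Bm).mulVecLin)
        = (⨆ t ∈ S, LinearMap.ker (pencil P0 Pinf (g t))).map
            (b.equivFun : V →ₗ[ℂ] (Fin m → ℂ)) := by
      simp only [Submodule.map_iSup]
      refine iSup_congr (fun t => ?_)
      refine iSup_congr (fun ht => ?_)
      rw [ker_map_equivFun, hk t]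
    rw [hEq, Submodule.mem_map] at hx2
    obtain ⟨y, hy, hxy⟩ := hx2
    have : y = x := b.equivFun.injective hxy
    rwa [← this]

lemma bad_finite : {ν : ℂ | some ν ∈ exceptional P0 Pinf}.Finite := by
  classical
  obtain ⟨l₀, hl₀⟩ := exists_nonexc P0 Pinf
  set b : Basis (Fin (finrank ℂ V)) ℂ V := Module.finBasis ℂ V with hb
  set M0 := (LinearMap.toMatrix₂ b b P0)ᵀ with hM0
  set Mi := (LinearMap.toMatrix₂ b b Pinf)ᵀ with hMi
  cases l₀ with
  | some μ₀ =>
    have hk : ∀ t : ℂ, LinearMap.ker ((M0 - μ₀ • Mi) + t • (-Mi)).mulVecLin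
        = LinearMap.ker ((LinearMap.toMatrix₂ b b
            (pencil P0 Pinf (some (μ₀ + t))))ᵀ.mulVecLin) := by
      intro t
      rw [pmat_some]
      congr 1
      rw [← hM0, ← hMi]
      rw [add_smul, smul_neg]
      abel
    obtain ⟨⟨F, hFfin, hFne⟩, -⟩ := gml_pencil_wrap P0 Pinf b (M0 - μ₀ • Mi) (-Mi)
      (fun t => some (μ₀ + t)) hk (by simpa using hl₀)
    apply Set.Finite.subset (hFfin.image (fun t => μ₀ + t))
    intro ν hν
    by_contra hmem
    have ht : ν - μ₀ ∉ F := by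
      intro hin
      have h2 : μ₀ + (ν - μ₀) ∈ (fun t => μ₀ + t) '' F := Set.mem_image_of_mem _ hin
      rw [show μ₀ + (ν - μ₀) = ν by ring] at h2
      exact hmem h2
    have := hFne (ν - μ₀) ht
    rw [show μ₀ + (ν - μ₀) = ν by ring] at this
    exact this hν
  | none =>
    set g : ℂ → Option ℂ := fun t => if t = 0 then none else some (-t⁻¹) with hg
    have hk : ∀ t : ℂ, LinearMap.ker (Mi + t • M0).mulVecLin
        = LinearMap.ker ((LinearMap.toMatrix₂ b b (pencil P0 Pinf (g t)))ᵀ.mulVecLin) := by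
      intro t
      by_cases h0 : t = 0
      · subst h0
        rw [hg]
        simp only [if_pos rfl]
        have : Mi + (0:ℂ) • M0 = Mi := by simp
        rw [this]
        rfl
      · rw [hg]
        simp only [if_neg h0]
        rw [pmat_some, ← hM0, ← hMi]
        have hmat : Mi + t • M0 = t • (M0 - (-t⁻¹) • Mi) := by
          rw [smul_sub, smul_smul]
          rw [show t * -t⁻¹ = -1 by field_simp]
          simp [add_comm]
        rw [hmat]
        have hsm : (t • (M0 - (-t⁻¹) • Mi)).mulVecLin
            = t • (M0 - (-t⁻¹) • Mi).mulVecLin := by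
          apply LinearMap.ext
          intro v
          simp [Matrix.mulVecLin_apply, Matrix.smul_mulVec]
        rw [hsm, LinearMap.ker_smul _ _ h0]
    obtain ⟨⟨F, hFfin, hFne⟩, -⟩ := gml_pencil_wrap P0 Pinf b Mi M0 g hk (by simpa [hg] using hl₀)
    have hinj : Function.Injective (fun ν : ℂ => -ν⁻¹) := by
      intro a b hab
      simp only [neg_inj] at hab
      exact inv_injective hab
    apply Set.Finite.subset (((hFfin.union (Set.finite_singleton 0)).preimage hinj.injOn))
    intro ν hν
    simp only [Set.mem_preimage, Set.mem_union, Set.mem_singleton_iff]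
    by_contra hcon
    push_neg at hcon
    obtain ⟨hF, h0⟩ := hcon
    have hν0 : ν ≠ 0 := by
      intro hh
      exact h0 (by rw [hh]; norm_num)
    have := hFne _ hF
    rw [hg] at this
    simp only [if_neg h0] at this
    rw [show -(-ν⁻¹)⁻¹ = ν by rw [inv_neg, neg_neg, inv_inv]] at this
    exact this hν

lemma lemA (l₀ : Option ℂ) (hl₀ : l₀ ∉ exceptional P0 Pinf) :
    LinearMap.ker (pencil P0 Pinf l₀) ≤
      ⨆ l ∈ {l : Option ℂ | l ∉ exceptional P0 Pinf ∧ l ≠ l₀},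
        LinearMap.ker (pencil P0 Pinf l) := by
  classical
  set b : Basis (Fin (finrank ℂ V)) ℂ V := Module.finBasis ℂ V with hb
  set M0 := (LinearMap.toMatrix₂ b b P0)ᵀ with hM0
  set Mi := (LinearMap.toMatrix₂ b b Pinf)ᵀ with hMi
  cases l₀ with
  | some μ₀ =>
    have hk : ∀ t : ℂ, LinearMap.ker ((M0 - μ₀ • Mi) + t • (-Mi)).mulVecLin
        = LinearMap.ker ((LinearMap.toMatrix₂ b b
            (pencil P0 Pinf (some (μ₀ + t))))ᵀ.mulVecLin) := by
      intro t
      rw [pmat_some]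
      congr 1
      rw [← hM0, ← hMi]
      rw [add_smul, smul_neg]
      abel
    obtain ⟨-, hSup⟩ := gml_pencil_wrap P0 Pinf b (M0 - μ₀ • Mi) (-Mi)
      (fun t => some (μ₀ + t)) hk (by simpa using hl₀)
    set S := {t : ℂ | t ≠ 0 ∧ some (μ₀ + t) ∉ exceptional P0 Pinf} with hS
    have hSinf : S.Infinite := by
      have hbad := bad_finite P0 Pinf
      exact infinite_aux (f := fun t => μ₀ + t) (add_right_injective μ₀) _ hbad
    have h1 := hSup S hSinf
    intro x hx
    have hx0 : x ∈ LinearMap.ker (pencil P0 Pinf (some (μ₀ + 0))) := by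
      rw [add_zero]; exact hx
    have hx1 := h1 hx0
    have hle : (⨆ t ∈ S, LinearMap.ker (pencil P0 Pinf (some (μ₀ + t)))) ≤
        ⨆ l ∈ {l : Option ℂ | l ∉ exceptional P0 Pinf ∧ l ≠ some μ₀},
          LinearMap.ker (pencil P0 Pinf l) := by
      refine iSup₂_le (fun t ht => ?_)
      refine le_iSup_of_le (some (μ₀ + t)) (le_iSup_of_le ⟨ht.2, ?_⟩ le_rfl)
      intro hc
      have h2 := Option.some.inj hc
      rw [add_eq_left] at h2
      exact ht.1 h2
    exact hle hx1
  | none =>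
    set g : ℂ → Option ℂ := fun t => if t = 0 then none else some (-t⁻¹) with hg
    have hk : ∀ t : ℂ, LinearMap.ker (Mi + t • M0).mulVecLin
        = LinearMap.ker ((LinearMap.toMatrix₂ b b (pencil P0 Pinf (g t)))ᵀ.mulVecLin) := by
      intro t
      by_cases h0 : t = 0
      · subst h0
        rw [hg]
        simp only [if_pos rfl]
        have : Mi + (0:ℂ) • M0 = Mi := by simp
        rw [this]
        rfl
      · rw [hg]
        simp only [if_neg h0]
        rw [pmat_some, ← hM0, ← hMi]
        have hmat : Mi + t • M0 = t • (M0 - (-t⁻¹) • Mi) := by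
          rw [smul_sub, smul_smul]
          rw [show t * -t⁻¹ = -1 by field_simp]
          simp [add_comm]
        rw [hmat]
        have hsm : (t • (M0 - (-t⁻¹) • Mi)).mulVecLin
            = t • (M0 - (-t⁻¹) • Mi).mulVecLin := by
          apply LinearMap.ext
          intro v
          simp [Matrix.mulVecLin_apply, Matrix.smul_mulVec]
        rw [hsm, LinearMap.ker_smul _ _ h0]
    obtain ⟨-, hSup⟩ := gml_pencil_wrap P0 Pinf b Mi M0 g hk (by simpa [hg] using hl₀)
    set S := {t : ℂ | t ≠ 0 ∧ some (-t⁻¹) ∉ exceptional P0 Pinf} with hS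
    have hSinf : S.Infinite := by
      have hbad := bad_finite P0 Pinf
      have hinj : Function.Injective (fun ν : ℂ => -ν⁻¹) := by
        intro a b hab
        simp only [neg_inj] at hab
        exact inv_injective hab
      exact infinite_aux hinj _ hbad
    have h1 := hSup S hSinf
    intro x hx
    have hx0 : x ∈ LinearMap.ker (pencil P0 Pinf (g 0)) := by
      rw [hg]; simp only [if_pos rfl]; exact hx
    have hx1 := h1 hx0
    have hle : (⨆ t ∈ S, LinearMap.ker (pencil P0 Pinf (g t))) ≤
        ⨆ l ∈ {l : Option ℂ | l ∉ exceptional P0 Pinf ∧ l ≠ none},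
          LinearMap.ker (pencil P0 Pinf l) := by
      refine iSup₂_le (fun t ht => ?_)
      have hgt : g t = some (-t⁻¹) := by rw [hg]; simp only [if_neg ht.1]
      rw [hgt]
      exact le_iSup_of_le (some (-t⁻¹))
        (le_iSup_of_le ⟨ht.2, Option.some_ne_none _⟩ le_rfl)
    exact hle hx1

end PencilLemmas

theorem stmt9_aux [FiniteDimensional ℂ V] (P0 Pinf : V →ₗ[ℂ] V →ₗ[ℂ] ℂ) :
    ∀ l₁ l₂ : Option ℂ,
      LinearMap.BilinForm.orthogonal (pencil P0 Pinf l₁) (Lspace P0 Pinf) =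
      LinearMap.BilinForm.orthogonal (pencil P0 Pinf l₂) (Lspace P0 Pinf) := by
  have key : ∀ (l₁ l₂ : Option ℂ) (ξ : V),
      ξ ∈ LinearMap.BilinForm.orthogonal (pencil P0 Pinf l₁) (Lspace P0 Pinf) →
      ξ ∈ LinearMap.BilinForm.orthogonal (pencil P0 Pinf l₂) (Lspace P0 Pinf) := by
    intro l₁ l₂ ξ hξ
    set N : Submodule ℂ V :=
      LinearMap.ker (P0.flip ξ) ⊓ LinearMap.ker (Pinf.flip ξ) with hN
    have hNval : ∀ l : Option ℂ, ∀ w ∈ N, (pencil P0 Pinf l) w ξ = 0 := by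
      intro l w hw
      obtain ⟨h0w, hiw⟩ := Submodule.mem_inf.mp hw
      rw [LinearMap.mem_ker] at h0w hiw
      have e0 : P0 w ξ = 0 := by simpa using h0w
      have ei : Pinf w ξ = 0 := by simpa using hiw
      cases l with
      | none => exact ei
      | some ν =>
        show (P0 - ν • Pinf) w ξ = 0
        rw [LinearMap.sub_apply, LinearMap.smul_apply, LinearMap.sub_apply,
          LinearMap.smul_apply, smul_eq_mul, e0, ei]
        ring
    have hclaim1 : ∀ μ : Option ℂ, μ ∉ exceptional P0 Pinf → μ ≠ l₁ →
        LinearMap.ker (pencil P0 Pinf μ) ≤ N := by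
      intro μ hμ hne w hw
      have hwL : w ∈ Lspace P0 Pinf := by
        have hle : LinearMap.ker (pencil P0 Pinf μ) ≤ Lspace P0 Pinf := by
          unfold Lspace
          exact le_iSup_of_le μ (le_iSup_of_le hμ le_rfl)
        exact hle hw
      have h1 : (pencil P0 Pinf l₁) w ξ = 0 := hξ w hwL
      have h2 : (pencil P0 Pinf μ) w ξ = 0 := by
        rw [LinearMap.mem_ker] at hw
        rw [hw]
        rfl
      have hboth : P0 w ξ = 0 ∧ Pinf w ξ = 0 := by
        cases μ with
        | none =>
          have hiw : Pinf w ξ = 0 := h2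
          cases l₁ with
          | none => exact absurd rfl hne
          | some a =>
            have h1' : P0 w ξ - a * Pinf w ξ = 0 := by
              simpa [pencil, LinearMap.sub_apply, LinearMap.smul_apply, smul_eq_mul] using h1
            rw [hiw, mul_zero, sub_zero] at h1'
            exact ⟨h1', hiw⟩
        | some mμ =>
          have h2' : P0 w ξ - mμ * Pinf w ξ = 0 := by
            simpa [pencil, LinearMap.sub_apply, LinearMap.smul_apply, smul_eq_mul] using h2
          cases l₁ with
          | none =>
            have h1' : Pinf w ξ = 0 := h1
            rw [h1', mul_zero, sub_zero] at h2'
            exact ⟨h2', h1'⟩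
          | some a =>
            have hne' : mμ ≠ a := fun hh => hne (by rw [hh])
            have h1' : P0 w ξ - a * Pinf w ξ = 0 := by
              simpa [pencil, LinearMap.sub_apply, LinearMap.smul_apply, smul_eq_mul] using h1
            have h3 : (a - mμ) * Pinf w ξ = 0 := by linear_combination h2' - h1'
            have hi : Pinf w ξ = 0 := by
              rcases mul_eq_zero.mp h3 with hc | hc
              · exact absurd (sub_eq_zero.mp hc).symm hne'
              · exact hc
            rw [hi, mul_zero, sub_zero] at h2'
            exact ⟨h2', hi⟩
      refine Submodule.mem_inf.mpr ⟨?_, ?_⟩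
      · rw [LinearMap.mem_ker]
        simpa using hboth.1
      · rw [LinearMap.mem_ker]
        simpa using hboth.2
    have hclaim2 : ∀ μ : Option ℂ, μ ∉ exceptional P0 Pinf →
        LinearMap.ker (pencil P0 Pinf μ) ≤ N := by
      intro μ hμ
      by_cases hne : μ = l₁
      · subst hne
        calc LinearMap.ker (pencil P0 Pinf μ)
            ≤ ⨆ l ∈ {l : Option ℂ | l ∉ exceptional P0 Pinf ∧ l ≠ μ},
                LinearMap.ker (pencil P0 Pinf l) := lemA P0 Pinf μ hμ
          _ ≤ N := iSup₂_le (fun l hl => hclaim1 l hl.1 hl.2)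
      · exact hclaim1 μ hμ hne
    have hLN : Lspace P0 Pinf ≤ N := by
      unfold Lspace
      exact iSup₂_le (fun μ hμ => hclaim2 μ hμ)
    rw [LinearMap.BilinForm.mem_orthogonal_iff]
    intro n hn
    exact hNval l₂ n (hLN hn)
  intro l₁ l₂
  ext ξ
  exact ⟨key l₁ l₂ ξ, key l₂ l₁ ξ⟩

/-- The skew-orthogonal complement `L^⊥ = {ξ ∣ P_λ(ξ,L) = 0}` is the same subspace for
every `λ ∈ ℂ ∪ {∞}`. -/
theorem stmt9 [FiniteDimensional ℂ V] (P0 Pinf : V →ₗ[ℂ] V →ₗ[ℂ] ℂ)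
    (h0 : ∀ v, P0 v v = 0) (hinf : ∀ v, Pinf v v = 0) :
    ∀ l₁ l₂ : Option ℂ,
      LinearMap.BilinForm.orthogonal (pencil P0 Pinf l₁) (Lspace P0 Pinf) =
      LinearMap.BilinForm.orthogonal (pencil P0 Pinf l₂) (Lspace P0 Pinf) :=
  stmt9_aux P0 Pinf
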